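/- arXiv:1302.3673 — 3 statements merged into one kernel-verified Lean document; each statement's English description precedes it below -/
import Mathlib

section
/- Complementary-dual principle in the double-well example: if σ̄ ∈ ℝ, σ̄ ≠ 0, satisfies the dual algebraic equation (α⁻¹σ̄ + λ)σ̄² = ½‖f‖², then x̄ = σ̄⁻¹ f is a critical point of Π (i.e. ∇Π(x̄) = 0) and Π(x̄) = Π^d(σ̄). -/
open scoped RealInnerProductSpace


/-- **Complementary-dual principle in the double-well example**: if `σ̄ ≠ 0`
satisfies the dual algebraic equation `(α⁻¹σ̄ + λ)σ̄² = ½‖f‖²`, then `x̄ = σ̄⁻¹ f`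
is a critical point of `Π(x) = ½α(½‖x‖² − λ)² − ⟨x,f⟩` and `Π(x̄) = Π^d(σ̄)`,
where `Π^d(σ) = −‖f‖²/(2σ) − ½α⁻¹σ² − λσ`. -/
theorem double_well_complementary_dual
    (n : ℕ) (hn : 1 ≤ n) (α lam : ℝ) (hα : 0 < α) (hlam : 0 < lam)
    (f : EuclideanSpace ℝ (Fin n)) (σ : ℝ) (hσ : σ ≠ 0)
    (hdual : (α⁻¹ * σ + lam) * σ ^ 2 = (1/2) * ‖f‖ ^ 2) :
    fderiv ℝ (fun x : EuclideanSpace ℝ (Fin n) =>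
        (1/2) * α * ((1/2) * ‖x‖ ^ 2 - lam) ^ 2 - (inner ℝ x f : ℝ)) (σ⁻¹ • f) = 0
    ∧ (1/2) * α * ((1/2) * ‖σ⁻¹ • f‖ ^ 2 - lam) ^ 2 - (inner ℝ (σ⁻¹ • f) f : ℝ)
      = -(‖f‖ ^ 2 / (2 * σ)) - (1/2) * α⁻¹ * σ ^ 2 - lam * σ := by
  let E := EuclideanSpace ℝ (Fin n)
  set x₀ : E := σ⁻¹ • f with hx₀
  have key : ‖f‖ ^ 2 = 2 * (α⁻¹ * σ + lam) * σ ^ 2 := by linear_combination -2*hdual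
  have hnx : ‖x₀‖ ^ 2 = σ⁻¹ ^ 2 * ‖f‖ ^ 2 := by
    rw [hx₀, norm_smul, mul_pow, Real.norm_eq_abs, sq_abs]
  have hc : (1/2) * ‖x₀‖ ^ 2 - lam = α⁻¹ * σ := by
    rw [hnx, key]; field_simp; ring
  have hff : (⟪x₀, f⟫ : ℝ) = σ⁻¹ * ‖f‖ ^ 2 := by
    rw [hx₀, real_inner_smul_left, real_inner_self_eq_norm_sq]
  have hxx : (⟪x₀, x₀⟫ : ℝ) = ‖x₀‖ ^ 2 := real_inner_self_eq_norm_sq _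
  -- derivative part
  have hid := hasFDerivAt_id (𝕜 := ℝ) x₀
  have hN := hid.inner ℝ hid
  have hg := (hN.const_mul (1/2 : ℝ)).sub_const lam
  have hL := hid.inner ℝ (hasFDerivAt_const f x₀)
  have hmain := ((hg.mul hg).const_mul ((1/2) * α)).sub hL
  have hzero : HasFDerivAt
      (fun x : E => (1/2) * α * (((1/2) * ⟪x, x⟫ - lam) * ((1/2) * ⟪x, x⟫ - lam)) - ⟪x, f⟫)
      (0 : E →L[ℝ] ℝ) x₀ := by
    refine hmain.congr_fderiv ?_
    symm
    ext v
    simp only [ContinuousLinearMap.zero_apply, ContinuousLinearMap.sub_apply,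
      ContinuousLinearMap.smul_apply, ContinuousLinearMap.add_apply,
      ContinuousLinearMap.comp_apply, ContinuousLinearMap.prod_apply,
      ContinuousLinearMap.coe_id', id_eq, fderivInnerCLM_apply, smul_eq_mul,
      ContinuousLinearMap.coe_smul', Pi.smul_apply, inner_zero_right]
    rw [hxx, hc]
    have h1 : (⟪x₀, v⟫ : ℝ) = σ⁻¹ * ⟪f, v⟫ := by rw [hx₀, real_inner_smul_left]
    have h2 : (⟪v, x₀⟫ : ℝ) = σ⁻¹ * ⟪f, v⟫ := by
      rw [hx₀, real_inner_smul_right, real_inner_comm]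
    rw [h1, h2, real_inner_comm v f]
    field_simp
    ring
  constructor
  · have hfun : (fun x : E => (1/2) * α * ((1/2) * ‖x‖ ^ 2 - lam) ^ 2 - (inner ℝ x f : ℝ))
        = (fun x : E => (1/2) * α * (((1/2) * ⟪x, x⟫ - lam) * ((1/2) * ⟪x, x⟫ - lam)) - ⟪x, f⟫) := by
      funext x
      rw [← real_inner_self_eq_norm_sq]
      ring
    rw [hfun, hzero.fderiv]
  · rw [hnx, hff, key]
    field_simp
    ring
end

section
/- Global minimizer via the positive dual root: if σ₁ > 0 satisfies the dual algebraic equation (α⁻¹σ₁ + λ)σ₁² = ½‖f‖², then x₁ = σ₁⁻¹ f is the unique global minimizer of Π over ℝⁿ, and Π(x₁) = Π^d(σ₁) = max_{σ > 0} Π^d(σ). -/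
set_option maxHeartbeats 1000000


/-- **Global minimizer via the positive dual root**: if `σ₁ > 0` satisfies the
dual algebraic equation `(α⁻¹σ₁ + λ)σ₁² = ½‖f‖²`, then `x₁ = σ₁⁻¹ f` is the unique
global minimizer of `Π(x) = ½α(½‖x‖² − λ)² − ⟨x,f⟩` over `ℝⁿ`, and
`Π(x₁) = Π^d(σ₁) = max_{σ>0} Π^d(σ)` where `Π^d(σ) = −‖f‖²/(2σ) − ½α⁻¹σ² − λσ`. -/
theorem double_well_global_minimizer
    (n : ℕ) (hn : 1 ≤ n) (α lam : ℝ) (hα : 0 < α) (hlam : 0 < lam)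
    (f : EuclideanSpace ℝ (Fin n)) (σ₁ : ℝ) (hσ₁ : 0 < σ₁)
    (hdual : (α⁻¹ * σ₁ + lam) * σ₁ ^ 2 = (1/2) * ‖f‖ ^ 2) :
    (∀ x : EuclideanSpace ℝ (Fin n), x ≠ σ₁⁻¹ • f →
      (1/2) * α * ((1/2) * ‖σ₁⁻¹ • f‖ ^ 2 - lam) ^ 2 - (inner ℝ (σ₁⁻¹ • f) f : ℝ)
        < (1/2) * α * ((1/2) * ‖x‖ ^ 2 - lam) ^ 2 - (inner ℝ x f : ℝ))
    ∧ (1/2) * α * ((1/2) * ‖σ₁⁻¹ • f‖ ^ 2 - lam) ^ 2 - (inner ℝ (σ₁⁻¹ • f) f : ℝ)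
        = -(‖f‖ ^ 2 / (2 * σ₁)) - (1/2) * α⁻¹ * σ₁ ^ 2 - lam * σ₁
    ∧ ∀ σ : ℝ, 0 < σ →
        -(‖f‖ ^ 2 / (2 * σ)) - (1/2) * α⁻¹ * σ ^ 2 - lam * σ
          ≤ -(‖f‖ ^ 2 / (2 * σ₁)) - (1/2) * α⁻¹ * σ₁ ^ 2 - lam * σ₁ := by
  have hα' : α ≠ 0 := ne_of_gt hα
  have hs : σ₁ ≠ 0 := ne_of_gt hσ₁
  have hf2 : ‖f‖ ^ 2 = 2 * (α⁻¹ * σ₁ + lam) * σ₁ ^ 2 := by linarith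
  have hfpos : 0 < ‖f‖ := by
    have h1 : 0 < ‖f‖ ^ 2 := by
      rw [hf2]
      have h2 : 0 < α⁻¹ * σ₁ + lam := by positivity
      have h3 := mul_pos h2 (pow_pos hσ₁ 2)
      nlinarith
    nlinarith [norm_nonneg f]
  have hx1norm : ‖σ₁⁻¹ • f‖ = σ₁⁻¹ * ‖f‖ := by
    rw [norm_smul, Real.norm_eq_abs, abs_of_pos]
    positivity
  have hinner1 : (inner ℝ (σ₁⁻¹ • f) f : ℝ) = σ₁⁻¹ * ‖f‖ ^ 2 := by
    rw [real_inner_smul_left, real_inner_self_eq_norm_sq]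
  set r₁ : ℝ := σ₁⁻¹ * ‖f‖ with hr₁def
  have hr₁pos : 0 < r₁ := by positivity
  have hfr : ‖f‖ = σ₁ * r₁ := by rw [hr₁def]; field_simp
  have hkey : α * ((1/2) * r₁ ^ 2 - lam) = σ₁ := by
    have h : r₁ ^ 2 = σ₁⁻¹ ^ 2 * ‖f‖ ^ 2 := by rw [hr₁def]; ring
    rw [hf2] at h
    have h' : r₁ ^ 2 = 2 * (α⁻¹ * σ₁ + lam) := by
      rw [h]; field_simp
    rw [h']
    field_simp
    ring
  have h3 : (1/2) * r₁ ^ 2 - lam = α⁻¹ * σ₁ := by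
    have : (1/2) * r₁ ^ 2 - lam = σ₁ / α := by
      field_simp
      linarith [hkey]
    rw [this]; field_simp
  have hr₁sq : 2 * lam < r₁ ^ 2 := by
    have h4 : 0 < α⁻¹ * σ₁ := by positivity
    nlinarith [h3]
  refine ⟨?_, ?_, ?_⟩
  · intro x hx
    rw [hx1norm, hinner1]
    have hcs : (inner ℝ x f : ℝ) ≤ ‖x‖ * ‖f‖ := real_inner_le_norm x f
    have hr0 : (0:ℝ) ≤ ‖x‖ := norm_nonneg x
    by_cases hrr : ‖x‖ = r₁
    · have hne : ‖f‖ • x ≠ ‖x‖ • f := by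
        intro h
        apply hx
        have h2 : ‖f‖ • x = ‖f‖ • (σ₁⁻¹ • f) := by
          rw [h, smul_smul]
          congr 1
          rw [hrr, hr₁def]; ring
        exact smul_right_injective _ (ne_of_gt hfpos) h2
      have hlt : (inner ℝ x f : ℝ) < ‖x‖ * ‖f‖ := inner_lt_norm_mul_iff_real.mpr hne
      rw [hrr] at hlt ⊢
      have hrf : r₁ * ‖f‖ = σ₁⁻¹ * ‖f‖ ^ 2 := by rw [hr₁def]; ring
      linarith
    · have hfact : (1/2) * α * ((1/2) * ‖x‖ ^ 2 - lam) ^ 2 - ‖x‖ * ‖f‖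
          - ((1/2) * α * ((1/2) * r₁ ^ 2 - lam) ^ 2 - σ₁⁻¹ * ‖f‖ ^ 2)
          = (α / 8) * (‖x‖ - r₁) ^ 2 * (‖x‖ ^ 2 + 2 * r₁ * ‖x‖ + 3 * r₁ ^ 2 - 4 * lam) := by
        have h1 : σ₁⁻¹ * ‖f‖ ^ 2 = σ₁ * r₁ ^ 2 := by
          rw [hfr]; field_simp
        rw [h1, hfr, ← hkey]
        ring
      have hposfac : 0 < ‖x‖ ^ 2 + 2 * r₁ * ‖x‖ + 3 * r₁ ^ 2 - 4 * lam := by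
        nlinarith [sq_nonneg ‖x‖, mul_nonneg (le_of_lt hr₁pos) hr0]
      have hsq : 0 < (‖x‖ - r₁) ^ 2 := by
        have h5 : ‖x‖ - r₁ ≠ 0 := sub_ne_zero.mpr hrr
        positivity
      have hP : 0 < (α / 8) * (‖x‖ - r₁) ^ 2 * (‖x‖ ^ 2 + 2 * r₁ * ‖x‖ + 3 * r₁ ^ 2 - 4 * lam) :=
        mul_pos (mul_pos (by linarith : (0:ℝ) < α / 8) hsq) hposfac
      linarith [hfact, hcs, hP]
  · rw [hx1norm, hinner1, h3]
    have h1 : σ₁⁻¹ * ‖f‖ ^ 2 = 2 * (α⁻¹ * σ₁ + lam) * σ₁ := by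
      rw [hf2]; field_simp
    have h2 : ‖f‖ ^ 2 / (2 * σ₁) = (α⁻¹ * σ₁ + lam) * σ₁ := by
      rw [hf2]; field_simp
    rw [h1, h2]
    field_simp
    ring
  · intro σ hσ
    have hσ' : σ ≠ 0 := ne_of_gt hσ
    rw [← sub_nonneg]
    have heq : -(‖f‖ ^ 2 / (2 * σ₁)) - (1/2) * α⁻¹ * σ₁ ^ 2 - lam * σ₁
        - (-(‖f‖ ^ 2 / (2 * σ)) - (1/2) * α⁻¹ * σ ^ 2 - lam * σ)
        = (σ₁ - σ) ^ 2 * (α⁻¹ * (σ₁ + σ / 2) + lam) / σ := by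
      rw [hf2]; field_simp; ring
    rw [heq]
    have h6 : 0 < α⁻¹ * (σ₁ + σ / 2) + lam := by positivity
    positivity
end

section
/- Local maximizer via the smallest dual root (double-max duality instance): suppose σ₃ < σ₂ < 0 are two distinct negative roots of the dual algebraic equation (α⁻¹σ + λ)σ² = ½‖f‖². Then x₃ = σ₃⁻¹ f is a strict local maximizer of Π on ℝⁿ. -/
open Filter Topology


private lemma dw_aux_key2 (α σ₃ A δ : ℝ) (hα : 0 < α) (hA0 : 0 ≤ A)
    (hδ : 0 < δ) (hδ1 : δ ≤ 1) (h2 : δ * (2 * α * (A + 1)) ≤ -(σ₃ + α * A ^ 2)) :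
    α * (A + δ / 2) ^ 2 + σ₃ < 0 := by
  have hδδ : δ * δ ≤ δ := by nlinarith
  nlinarith [mul_pos hα hδ]

private lemma dw_aux_main (α σ₃ A δ H I : ℝ) (hα : 0 < α) (hA0 : 0 ≤ A)
    (hH0 : 0 < H) (hHδ : H < δ) (habs1 : I ≤ A * H) (habs2 : -(A * H) ≤ I)
    (key2 : α * (A + δ / 2) ^ 2 + σ₃ < 0) :
    (1/2) * α * (I + H ^ 2 / 2) ^ 2 + σ₃ * (H ^ 2 / 2) < 0 := by
  have ht : (I + H ^ 2 / 2) ^ 2 ≤ (A * H + H ^ 2 / 2) ^ 2 := by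
    apply sq_le_sq'
    · nlinarith
    · nlinarith
  have ht2 : (A * H + H ^ 2 / 2) ^ 2 ≤ ((A + δ / 2) * H) ^ 2 := by
    apply sq_le_sq'
    · nlinarith
    · nlinarith
  nlinarith [mul_pos hH0 hH0, mul_pos hα (mul_pos hH0 hH0)]

set_option maxHeartbeats 800000 in
/-- **Local maximizer via the smallest dual root** (double-max duality instance):
if `σ₃ < σ₂ < 0` are two distinct negative roots of the dual algebraic equation
`(α⁻¹σ + λ)σ² = ½‖f‖²`, then `x₃ = σ₃⁻¹ f` is a strict local maximizer of
`Π(x) = ½α(½‖x‖² − λ)² − ⟨x,f⟩` on `ℝⁿ`. -/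
theorem double_well_local_maximizer
    (n : ℕ) (hn : 1 ≤ n) (α lam : ℝ) (hα : 0 < α) (hlam : 0 < lam)
    (f : EuclideanSpace ℝ (Fin n)) (σ₂ σ₃ : ℝ)
    (h32 : σ₃ < σ₂) (h20 : σ₂ < 0)
    (hdual2 : (α⁻¹ * σ₂ + lam) * σ₂ ^ 2 = (1/2) * ‖f‖ ^ 2)
    (hdual3 : (α⁻¹ * σ₃ + lam) * σ₃ ^ 2 = (1/2) * ‖f‖ ^ 2) :
    ∀ᶠ x in 𝓝[≠] (σ₃⁻¹ • f : EuclideanSpace ℝ (Fin n)),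
      (1/2) * α * ((1/2) * ‖x‖ ^ 2 - lam) ^ 2 - (inner ℝ x f : ℝ)
        < (1/2) * α * ((1/2) * ‖σ₃⁻¹ • f‖ ^ 2 - lam) ^ 2 - (inner ℝ (σ₃⁻¹ • f) f : ℝ) := by
  have hσ3neg : σ₃ < 0 := h32.trans h20
  have hσ3 : σ₃ ≠ 0 := ne_of_lt hσ3neg
  set x₃ : EuclideanSpace ℝ (Fin n) := σ₃⁻¹ • f with hx₃def
  have hf : f = σ₃ • x₃ := by
    rw [hx₃def, smul_smul, mul_inv_cancel₀ hσ3, one_smul]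
  obtain ⟨A, hAdef⟩ : ∃ A : ℝ, A = ‖x₃‖ := ⟨_, rfl⟩
  have hA0 : 0 ≤ A := hAdef ▸ norm_nonneg _
  -- norm of x₃
  have hnx : A ^ 2 = σ₃⁻¹ ^ 2 * ‖f‖ ^ 2 := by
    rw [hAdef, hx₃def, norm_smul, mul_pow, Real.norm_eq_abs, sq_abs]
  have hA : α * A ^ 2 = 2 * σ₃ + 2 * α * lam := by
    have h1 : ‖f‖ ^ 2 = 2 * (α⁻¹ * σ₃ + lam) * σ₃ ^ 2 := by linarith
    rw [hnx, h1]
    field_simp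
  -- key negativity: σ₃ + αA² = 3σ₃ + 2αλ < 0
  have hαinv : α * α⁻¹ = 1 := mul_inv_cancel₀ hα.ne'
  have hfac : (σ₂ - σ₃) * (α⁻¹ * (σ₂ ^ 2 + σ₂ * σ₃ + σ₃ ^ 2) + lam * (σ₂ + σ₃)) = 0 := by
    linear_combination hdual2 - hdual3
  have hd : α⁻¹ * (σ₂ ^ 2 + σ₂ * σ₃ + σ₃ ^ 2) + lam * (σ₂ + σ₃) = 0 := by
    rcases mul_eq_zero.mp hfac with h | h
    · exfalso; linarith
    · exact h
  have hdα : σ₂ ^ 2 + σ₂ * σ₃ + σ₃ ^ 2 + α * lam * (σ₂ + σ₃) = 0 := by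
    linear_combination α * hd - (σ₂ ^ 2 + σ₂ * σ₃ + σ₃ ^ 2) * hαinv
  have h3 : 3 * σ₃ + 2 * α * lam < 0 := by
    nlinarith [mul_pos (show (0:ℝ) < σ₂ - σ₃ by linarith)
      (show (0:ℝ) < -(σ₃ + 2 * σ₂) by linarith), hdα]
  have key : σ₃ + α * A ^ 2 < 0 := by linarith
  -- choose radius δ
  obtain ⟨δ, hδ, hδ1, h2⟩ :
      ∃ δ : ℝ, 0 < δ ∧ δ ≤ 1 ∧ δ * (2 * α * (A + 1)) ≤ -(σ₃ + α * A ^ 2) := by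
    refine ⟨min 1 ((-(σ₃ + α * A ^ 2)) / (2 * α * (A + 1))), ?_, min_le_left _ _, ?_⟩
    · exact lt_min one_pos (div_pos (by linarith) (by positivity))
    · rw [← le_div_iff₀ (by positivity : (0:ℝ) < 2 * α * (A + 1))]
      exact min_le_right _ _
  have key2 : α * (A + δ / 2) ^ 2 + σ₃ < 0 :=
    dw_aux_key2 α σ₃ A δ hα hA0 hδ hδ1 h2
  -- conclude
  filter_upwards [nhdsWithin_le_nhds (Metric.ball_mem_nhds x₃ hδ),
    self_mem_nhdsWithin] with x hx hxne
  have hxne' : x ≠ x₃ := hxne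
  obtain ⟨H, hHdef⟩ : ∃ H : ℝ, H = ‖x - x₃‖ := ⟨_, rfl⟩
  obtain ⟨I, hIdef⟩ : ∃ I : ℝ, I = (inner ℝ x₃ (x - x₃) : ℝ) := ⟨_, rfl⟩
  have hH0 : 0 < H := by
    rw [hHdef, norm_pos_iff]
    exact sub_ne_zero.mpr hxne'
  have hHδ : H < δ := by
    rw [Metric.mem_ball, dist_eq_norm] at hx
    rw [hHdef]; exact hx
  have hxsum : x = x₃ + (x - x₃) := by abel
  have hxx : ‖x‖ ^ 2 = A ^ 2 + 2 * I + H ^ 2 := by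
    rw [hAdef, hIdef, hHdef]
    conv_lhs => rw [hxsum]
    rw [@norm_add_sq_real]
  have hinner : (inner ℝ x f : ℝ) = (inner ℝ x₃ f : ℝ) + σ₃ * I := by
    conv_lhs => rw [hxsum]
    rw [inner_add_left, hIdef]
    congr 1
    rw [hf, real_inner_smul_right, real_inner_comm]
  have habs : |I| ≤ A * H := by
    rw [hIdef, hAdef, hHdef]; exact abs_real_inner_le_norm x₃ (x - x₃)
  have habs1 : I ≤ A * H := (abs_le.mp habs).2
  have habs2 : -(A * H) ≤ I := (abs_le.mp habs).1
  have main : (1/2) * α * (I + H ^ 2 / 2) ^ 2 + σ₃ * (H ^ 2 / 2) < 0 :=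
    dw_aux_main α σ₃ A δ H I hα hA0 hH0 hHδ habs1 habs2 key2
  have expand : (1/2) * α * ((1/2) * (A ^ 2 + 2 * I + H ^ 2) - lam) ^ 2
        - ((inner ℝ x₃ f : ℝ) + σ₃ * I)
        - ((1/2) * α * ((1/2) * A ^ 2 - lam) ^ 2 - (inner ℝ x₃ f : ℝ))
      = (1/2) * α * (I + H ^ 2 / 2) ^ 2 + σ₃ * (H ^ 2 / 2) := by
    linear_combination ((I + H ^ 2 / 2) / 2) * hA
  rw [hxx, hinner, ← hAdef]
  linarith [expand, main]
end
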